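/- Let H be a complex Hilbert space and let S, T be normal bounded linear operators on H with Cartesian decompositions S = A + iC and T = B + iD such that C and D are positive. Then ‖ST − TS‖ ≤ (1/2)·√(4‖A‖² + ‖C‖²)·√(4‖B‖² + ‖D‖²). -/

import Mathlib

section CommutatorAux

variable {A : Type*} [CStarAlgebra A]

lemma my_sa_norm_mul_self {a : A} (ha : IsSelfAdjoint a) : ‖a * a‖ = ‖a‖ ^ 2 := by
  nth_rw 1 [← ha.star_eq]; rw [CStarRing.norm_star_mul_self, sq]

lemma my_shift_norm {a c : A} (ha : IsSelfAdjoint a) (hc : IsSelfAdjoint c)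
    (hcomm : a * c = c * a) : ‖a + Complex.I • c‖ ≤ Real.sqrt (‖a‖ ^ 2 + ‖c‖ ^ 2) := by
  have key : star (a + Complex.I • c) * (a + Complex.I • c) = a * a + c * c := by
    simp [star_add, star_smul, ha.star_eq, hc.star_eq, add_mul, mul_add,
      smul_mul_assoc, mul_smul_comm, smul_smul, Complex.star_def, Complex.conj_I, hcomm,
      Complex.I_mul_I]
  have hn : ‖a + Complex.I • c‖ ^ 2 = ‖a * a + c * c‖ := by
    rw [← key, CStarRing.norm_star_mul_self, sq]
  have hb : ‖a + Complex.I • c‖ ^ 2 ≤ ‖a‖ ^ 2 + ‖c‖ ^ 2 := by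
    rw [hn]
    calc ‖a * a + c * c‖ ≤ ‖a * a‖ + ‖c * c‖ := norm_add_le _ _
    _ = ‖a‖ ^ 2 + ‖c‖ ^ 2 := by rw [my_sa_norm_mul_self ha, my_sa_norm_mul_self hc]
  have := Real.sqrt_le_sqrt hb
  rwa [Real.sqrt_sq (norm_nonneg _)] at this

variable [PartialOrder A] [StarOrderedRing A]

lemma my_sa_norm_le {a : A} {r : ℝ} (ha : IsSelfAdjoint a) (hr : 0 ≤ r)
    (h1 : -(algebraMap ℝ A r) ≤ a) (h2 : a ≤ algebraMap ℝ A r) : ‖a‖ ≤ r := by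
  obtain h | h := subsingleton_or_nontrivial A
  · simp [Subsingleton.elim a 0, hr]
  rcases CStarAlgebra.norm_or_neg_norm_mem_spectrum ha with h | h
  · exact (le_algebraMap_iff_spectrum_le (a := a) ha).mp h2 _ h
  · have h1' : algebraMap ℝ A (-r) ≤ a := by rw [map_neg]; exact h1
    have := (algebraMap_le_iff_le_spectrum (a := a) ha).mp h1' _ h
    linarith

lemma my_half_norm {a : A} (ha : 0 ≤ a) :
    ‖a - algebraMap ℝ A (‖a‖ / 2)‖ ≤ ‖a‖ / 2 := by
  have hsa : IsSelfAdjoint a := .of_nonneg ha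
  refine my_sa_norm_le (hsa.sub (IsSelfAdjoint.algebraMap A (isSelfAdjoint_iff.mpr rfl)))
    (by positivity) ?_ ?_
  · simpa using ha
  · have h := hsa.le_algebraMap_norm_self
    have heq : algebraMap ℝ A ‖a‖ = algebraMap ℝ A (‖a‖/2) + algebraMap ℝ A (‖a‖/2) := by
      rw [← map_add]; ring_nf
    rw [heq] at h
    exact sub_le_iff_le_add.mpr h

/-- For a normal `s = a + i c` with `c ≥ 0`, `‖s - i(‖c‖/2)·1‖ ≤ √(‖a‖² + (‖c‖/2)²)`. -/
lemma my_shifted_bound {s a c : A} (ha : IsSelfAdjoint a) (hc : 0 ≤ c)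
    (hcomm : a * c = c * a) (hdec : s = a + Complex.I • c) :
    ‖s - (Complex.I * (‖c‖ / 2 : ℝ)) • 1‖ ≤ Real.sqrt (‖a‖ ^ 2 + (‖c‖ / 2) ^ 2) := by
  have hcsa : IsSelfAdjoint c := .of_nonneg hc
  set c' : A := c - algebraMap ℝ A (‖c‖ / 2) with hc'
  have hc'sa : IsSelfAdjoint c' :=
    hcsa.sub (IsSelfAdjoint.algebraMap A (isSelfAdjoint_iff.mpr rfl))
  have hc'comm : a * c' = c' * a := by
    rw [hc', mul_sub, sub_mul, hcomm, Algebra.commutes]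
  have hrepr : s - (Complex.I * (‖c‖ / 2 : ℝ)) • 1 = a + Complex.I • c' := by
    rw [hdec, hc', IsScalarTower.algebraMap_apply ℝ ℂ A, Algebra.algebraMap_eq_smul_one,
      smul_sub, smul_smul]
    abel
  rw [hrepr]
  refine (my_shift_norm ha hc'sa hc'comm).trans (Real.sqrt_le_sqrt ?_)
  have h1 : ‖c'‖ ≤ ‖c‖ / 2 := my_half_norm hc
  have h2 : ‖c'‖ ^ 2 ≤ (‖c‖ / 2) ^ 2 := by
    apply pow_le_pow_left₀ (norm_nonneg _) h1
  linarith

end CommutatorAux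

/-- For normal `S = A + iC`, `T = B + iD` with `C, D` positive,
`‖ST − TS‖ ≤ (1/2)√(4‖A‖² + ‖C‖²)·√(4‖B‖² + ‖D‖²)`. -/
theorem commutator_norm_bound_of_positive_imaginary_parts
    {H : Type*} [NormedAddCommGroup H] [InnerProductSpace ℂ H] [CompleteSpace H]
    (S T A B C D : H →L[ℂ] H)
    (hS : IsStarNormal S) (hT : IsStarNormal T)
    (hA : IsSelfAdjoint A) (hB : IsSelfAdjoint B)
    (hSdec : S = A + Complex.I • C) (hTdec : T = B + Complex.I • D)
    (hC : C.IsPositive) (hD : D.IsPositive) :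
    ‖S * T - T * S‖ ≤
      (1 / 2) * Real.sqrt (4 * ‖A‖ ^ 2 + ‖C‖ ^ 2) * Real.sqrt (4 * ‖B‖ ^ 2 + ‖D‖ ^ 2) := by
  have hCsa : IsSelfAdjoint C := hC.isSelfAdjoint
  have hDsa : IsSelfAdjoint D := hD.isSelfAdjoint
  -- the real and imaginary parts of a normal operator commute
  have hcomm : ∀ (X Y Z : H →L[ℂ] H), IsStarNormal X → IsSelfAdjoint Y → IsSelfAdjoint Z →
      X = Y + Complex.I • Z → Y * Z = Z * Y := by
    intro X Y Z hX hY hZ hXdec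
    have h := hX.star_comm_self
    rw [hXdec] at h
    have h2 : (2 * Complex.I) • (Y * Z) - (2 * Complex.I) • (Z * Y) = 0 := by
      have h3 := sub_eq_zero.mpr h.eq
      calc (2 * Complex.I) • (Y * Z) - (2 * Complex.I) • (Z * Y)
          = star (Y + Complex.I • Z) * (Y + Complex.I • Z)
            - (Y + Complex.I • Z) * star (Y + Complex.I • Z) := by
            simp only [star_add, star_smul, hY.star_eq, hZ.star_eq, Complex.star_def,
              Complex.conj_I, add_mul, mul_add, smul_mul_assoc, mul_smul_comm, smul_smul,
              neg_smul, neg_mul, mul_neg, Complex.I_mul_I]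
            module
      _ = 0 := h3
    rw [← smul_sub, smul_eq_zero] at h2
    rcases h2 with h2 | h2
    · exact absurd h2 (by simp [Complex.I_ne_zero])
    · exact sub_eq_zero.mp h2
  have hAC : A * C = C * A := hcomm S A C hS hA hCsa hSdec
  have hBD : B * D = D * B := hcomm T B D hT hB hDsa hTdec
  have hCpos : (0 : H →L[ℂ] H) ≤ C := (ContinuousLinearMap.nonneg_iff_isPositive C).mpr hC
  have hDpos : (0 : H →L[ℂ] H) ≤ D := (ContinuousLinearMap.nonneg_iff_isPositive D).mpr hD
  set z : ℂ := Complex.I * (‖C‖ / 2 : ℝ) with hz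
  set w : ℂ := Complex.I * (‖D‖ / 2 : ℝ) with hw
  set P : H →L[ℂ] H := S - z • 1 with hPdef
  set Q : H →L[ℂ] H := T - w • 1 with hQdef
  have hP : ‖P‖ ≤ Real.sqrt (‖A‖ ^ 2 + (‖C‖ / 2) ^ 2) := my_shifted_bound hA hCpos hAC hSdec
  have hQ : ‖Q‖ ≤ Real.sqrt (‖B‖ ^ 2 + (‖D‖ / 2) ^ 2) := my_shifted_bound hB hDpos hBD hTdec
  have hId : S * T - T * S = P * Q - Q * P := by
    simp only [hPdef, hQdef, sub_mul, mul_sub, smul_mul_assoc, mul_smul_comm, one_mul, mul_one,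
      smul_sub, smul_smul]
    module
  have hnorm : ‖S * T - T * S‖ ≤ 2 * ‖P‖ * ‖Q‖ := by
    rw [hId]
    calc ‖P * Q - Q * P‖ ≤ ‖P * Q‖ + ‖Q * P‖ := norm_sub_le _ _
    _ ≤ ‖P‖ * ‖Q‖ + ‖Q‖ * ‖P‖ := add_le_add (norm_mul_le _ _) (norm_mul_le _ _)
    _ = 2 * ‖P‖ * ‖Q‖ := by ring
  have hs1 : Real.sqrt (‖A‖ ^ 2 + (‖C‖ / 2) ^ 2)
      = (1 / 2) * Real.sqrt (4 * ‖A‖ ^ 2 + ‖C‖ ^ 2) := by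
    rw [show ‖A‖ ^ 2 + (‖C‖ / 2) ^ 2 = (4 * ‖A‖ ^ 2 + ‖C‖ ^ 2) / 4 by ring,
      Real.sqrt_div (by positivity),
      show Real.sqrt 4 = 2 by rw [show (4:ℝ) = 2 ^ 2 by norm_num, Real.sqrt_sq (by norm_num)]]
    ring
  have hs2 : Real.sqrt (‖B‖ ^ 2 + (‖D‖ / 2) ^ 2)
      = (1 / 2) * Real.sqrt (4 * ‖B‖ ^ 2 + ‖D‖ ^ 2) := by
    rw [show ‖B‖ ^ 2 + (‖D‖ / 2) ^ 2 = (4 * ‖B‖ ^ 2 + ‖D‖ ^ 2) / 4 by ring,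
      Real.sqrt_div (by positivity),
      show Real.sqrt 4 = 2 by rw [show (4:ℝ) = 2 ^ 2 by norm_num, Real.sqrt_sq (by norm_num)]]
    ring
  have hfinal : 2 * ‖P‖ * ‖Q‖
      ≤ 2 * Real.sqrt (‖A‖ ^ 2 + (‖C‖ / 2) ^ 2) * Real.sqrt (‖B‖ ^ 2 + (‖D‖ / 2) ^ 2) := by
    apply mul_le_mul _ hQ (norm_nonneg Q) (by positivity)
    nlinarith [hP, norm_nonneg P]
  calc ‖S * T - T * S‖ ≤ 2 * ‖P‖ * ‖Q‖ := hnorm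
  _ ≤ 2 * Real.sqrt (‖A‖ ^ 2 + (‖C‖ / 2) ^ 2) * Real.sqrt (‖B‖ ^ 2 + (‖D‖ / 2) ^ 2) := hfinal
  _ = (1 / 2) * Real.sqrt (4 * ‖A‖ ^ 2 + ‖C‖ ^ 2) * Real.sqrt (4 * ‖B‖ ^ 2 + ‖D‖ ^ 2) := by
      rw [hs1, hs2]; ring
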